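/- Define a doubly-indexed sequence of reals M_{k,l} for k, l ≥ 1 by: M_{k,1} = M_{1,l} = 1 for all k, l ≥ 1, and M_{k,l} = (M_{k,l−1}^{−1/μ} + M_{k−1,l}^{−1/μ})^{−μ} for k, l ≥ 2, where μ = max(k,l). Then for every integer t ≥ 2, c_t ≥ M_{t,t}. -/

import Mathlib

set_option linter.unusedSectionVars false
set_option maxHeartbeats 8000000

/-- The number of complete subgraphs of order `t` in `G` (as sets of vertices). -/
noncomputable def cliqueCount {n : ℕ} (G : SimpleGraph (Fin n)) (t : ℕ) : ℕ :=
  {s : Finset (Fin n) | G.IsNClique t s}.ncard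

/-- `kt n t` is the minimum of `k_t(G) + k_t(Gᶜ)` over all graphs `G` on `n` vertices,
i.e. the minimum number of monochromatic `K_t`s in a two-colouring of the edges of `K_n`. -/
noncomputable def kt (n t : ℕ) : ℕ :=
  sInf {m : ℕ | ∃ G : SimpleGraph (Fin n), cliqueCount G t + cliqueCount Gᶜ t = m}

/-- `ctn t n = k_t(n) / binom(n,t)`. -/
noncomputable def ctn (t n : ℕ) : ℝ := (kt n t : ℝ) / (n.choose t : ℝ)

namespace Stmt7Aux

open Finset SimpleGraph Real

open scoped Classical

variable {V : Type} [Fintype V] [DecidableEq V]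

/-- The number of `j`-cliques of `G` contained in the ground set `s`. -/
noncomputable def Nc (G : SimpleGraph V) (j : ℕ) (s : Finset V) : ℕ :=
  (s.powerset.filter fun T => G.IsNClique j T).card

/-- The neighbours of `v` inside `s`. -/
noncomputable def nbr (G : SimpleGraph V) (v : V) (s : Finset V) : Finset V :=
  s.filter fun u => G.Adj v u

lemma nbr_subset (G : SimpleGraph V) (v : V) (s : Finset V) : nbr G v s ⊆ s :=
  filter_subset _ _

lemma mem_nbr {G : SimpleGraph V} {v u : V} {s : Finset V} :
    u ∈ nbr G v s ↔ u ∈ s ∧ G.Adj v u := by simp [nbr]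

lemma not_mem_nbr (G : SimpleGraph V) (v : V) (s : Finset V) : v ∉ nbr G v s := by
  simp [nbr]

lemma Nc_mono (G : SimpleGraph V) (j : ℕ) {s s' : Finset V} (h : s ⊆ s') :
    Nc G j s ≤ Nc G j s' := by
  classical
  exact card_le_card (filter_subset_filter _ (powerset_mono.mpr h))

lemma Nc_one (G : SimpleGraph V) (s : Finset V) : Nc G 1 s = s.card := by
  rw [Nc]
  have h : (s.powerset.filter fun T => G.IsNClique 1 T) = s.image (fun a => {a}) := by
    ext T
    simp only [mem_filter, mem_powerset, mem_image, isNClique_one]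
    constructor
    · rintro ⟨hTs, a, rfl⟩
      exact ⟨a, hTs (by simp), rfl⟩
    · rintro ⟨a, ha, rfl⟩
      exact ⟨by simpa using ha, a, rfl⟩
  rw [h, card_image_of_injective _ fun a b hab => by simpa using hab]

lemma nbr_card_add {G : SimpleGraph V} {v : V} {s : Finset V} (hv : v ∈ s) :
    (nbr G v s).card + (nbr Gᶜ v s).card = s.card - 1 := by
  have hdisj : Disjoint (nbr G v s) (nbr Gᶜ v s) := by
    rw [Finset.disjoint_left]
    intro u hu hu'
    exact ((mem_nbr.mp hu').2).2 (mem_nbr.mp hu).2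
  have hunion : nbr G v s ∪ nbr Gᶜ v s = s.erase v := by
    ext u
    simp only [mem_union, mem_nbr, mem_erase, compl_adj]
    constructor
    · rintro (⟨hu, h⟩ | ⟨hu, h⟩)
      · exact ⟨h.ne.symm, hu⟩
      · exact ⟨fun e => h.1 e.symm, hu⟩
    · rintro ⟨hne, hu⟩
      by_cases hadj : G.Adj v u
      · exact Or.inl ⟨hu, hadj⟩
      · exact Or.inr ⟨hu, fun e => hne e.symm, hadj⟩
  have := card_union_of_disjoint hdisj
  rw [hunion, card_erase_of_mem hv] at this
  omega

lemma key_id (G : SimpleGraph V) (j : ℕ) (s : Finset V) :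
    (j + 1) * Nc G (j + 1) s = ∑ v ∈ s, Nc G j (nbr G v s) := by
  classical
  have step1 : ∑ T ∈ s.powerset.filter (fun T => G.IsNClique (j+1) T), T.card
      = (j + 1) * Nc G (j + 1) s := by
    rw [Nc, Finset.sum_const_nat (m := j + 1) (fun T hT => (mem_filter.mp hT).2.2), Nat.mul_comm]
  rw [← step1]
  have step2 : ∀ T ∈ s.powerset.filter (fun T => G.IsNClique (j+1) T),
      T.card = ∑ v ∈ s, if v ∈ T then 1 else 0 := by
    intro T hT
    have hTs : T ⊆ s := mem_powerset.mp (mem_filter.mp hT).1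
    have : s.filter (fun v => v ∈ T) = T := by
      ext u; simp only [mem_filter]
      exact ⟨fun h => h.2, fun h => ⟨hTs h, h⟩⟩
    conv_lhs => rw [← this]
    rw [card_filter]
  rw [Finset.sum_congr rfl step2, Finset.sum_comm]
  refine Finset.sum_congr rfl fun v hv => ?_
  rw [← card_filter]
  rw [Nc]
  refine card_bij' (fun T _ => T.erase v) (fun T' _ => insert v T') ?_ ?_ ?_ ?_
  · intro T hT
    simp only [mem_filter, mem_powerset] at hT ⊢
    obtain ⟨⟨hTs, hcl⟩, hvT⟩ := hT
    refine ⟨fun u hu => ?_, ?_, ?_⟩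
    · rw [mem_erase] at hu
      exact mem_nbr.mpr ⟨hTs hu.2, hcl.1 hvT hu.2 fun e => hu.1 e.symm⟩
    · exact hcl.1.subset (Finset.coe_subset.mpr (erase_subset v T))
    · rw [card_erase_of_mem hvT, hcl.2]; omega
  · intro T' hT'
    simp only [mem_filter, mem_powerset] at hT' ⊢
    obtain ⟨hT's, hcl⟩ := hT'
    have hvT' : v ∉ T' := fun h => not_mem_nbr G v s (hT's h)
    have hadj : ∀ b ∈ T', G.Adj v b := fun b hb => (mem_nbr.mp (hT's hb)).2
    refine ⟨⟨?_, hcl.insert hadj⟩, mem_insert_self _ _⟩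
    intro u hu
    rcases mem_insert.mp hu with rfl | hu
    · exact hv
    · exact (mem_nbr.mp (hT's hu)).1
  · intro T hT
    simp only [mem_filter] at hT
    exact insert_erase hT.2
  · intro T' hT'
    simp only [mem_filter, mem_powerset] at hT'
    exact erase_insert fun h => not_mem_nbr G v s (hT'.1 h)

end Stmt7Aux

section RealLemmas

open Real

/-- Bernoulli-type estimate. -/
lemma pow_le_sub_pow_add {x : ℝ} (hx : 1 ≤ x) (μ : ℕ) (hμ : 1 ≤ μ) :
    x ^ μ ≤ (x - 1) ^ μ + μ * x ^ (μ - 1) := by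
  obtain ⟨e, rfl⟩ : ∃ e, μ = e + 1 := ⟨μ - 1, by omega⟩
  clear hμ
  simp only [Nat.add_sub_cancel]
  induction e with
  | zero => simp
  | succ e ih =>
    have hx0 : (0:ℝ) ≤ x := by linarith
    have hx1 : (0:ℝ) ≤ x - 1 := by linarith
    have h1 : (x - 1) ^ (e + 1) ≤ x ^ (e + 1) := pow_le_pow_left₀ hx1 (by linarith) _
    calc x ^ (e + 1 + 1) = x * x ^ (e + 1) := by ring
      _ ≤ x * ((x - 1) ^ (e + 1) + (↑(e + 1) : ℝ) * x ^ e) :=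
          mul_le_mul_of_nonneg_left ih hx0
      _ = (x - 1) ^ (e + 1 + 1) + (x - 1) ^ (e + 1) + (↑(e + 1) : ℝ) * x ^ (e + 1) := by
          push_cast; ring
      _ ≤ (x - 1) ^ (e + 1 + 1) + x ^ (e + 1) + (↑(e + 1) : ℝ) * x ^ (e + 1) := by linarith
      _ = (x - 1) ^ (e + 1 + 1) + (↑(e + 1 + 1) : ℝ) * x ^ (e + 1) := by push_cast; ring

/-- Two-point Radon/Jensen inequality in the precise form needed. -/
lemma radon {A B : ℝ} (hA : 0 < A) (hB : 0 < B) {μ : ℕ} (hμ : 2 ≤ μ) :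
    ∃ θ : ℝ, 0 ≤ θ ∧ θ ≤ 1 ∧ ∀ x y : ℝ, 0 ≤ x → 0 ≤ y →
      (A ^ (-1 / (μ : ℝ)) + B ^ (-1 / (μ : ℝ))) ^ (-(μ : ℝ)) * (x + y) ^ μ ≤
        θ * A * x ^ μ + (1 - θ) * B * y ^ μ := by
  have hμ0 : (0:ℝ) < (μ : ℝ) := by positivity
  set a : ℝ := A ^ (-1 / (μ : ℝ)) with ha
  set b : ℝ := B ^ (-1 / (μ : ℝ)) with hb
  have ha0 : 0 < a := rpow_pos_of_pos hA _
  have hb0 : 0 < b := rpow_pos_of_pos hB _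
  set S : ℝ := a + b with hS
  have hS0 : 0 < S := by positivity
  set θ : ℝ := a / S with hθ
  have hθ0 : 0 < θ := by positivity
  have hθ1 : θ < 1 := by rw [hθ, div_lt_one hS0]; linarith
  have h1θ : 1 - θ = b / S := by rw [hθ]; field_simp; rw [hS]; ring
  have h1θ0 : 0 < 1 - θ := by rw [h1θ]; positivity
  set M0 : ℝ := S ^ (-(μ : ℝ)) with hM0
  have hM00 : 0 < M0 := rpow_pos_of_pos hS0 _
  have hapow : a ^ μ = A⁻¹ := by
    rw [ha, ← rpow_natCast (A ^ (-1 / (μ:ℝ))) μ, ← rpow_mul hA.le]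
    rw [show (-1 / (μ:ℝ)) * (μ:ℝ) = -1 by field_simp]
    rw [rpow_neg_one]
  have hbpow : b ^ μ = B⁻¹ := by
    rw [hb, ← rpow_natCast (B ^ (-1 / (μ:ℝ))) μ, ← rpow_mul hB.le]
    rw [show (-1 / (μ:ℝ)) * (μ:ℝ) = -1 by field_simp]
    rw [rpow_neg_one]
  have hSpow : M0 = (S ^ μ)⁻¹ := by
    rw [hM0, rpow_neg hS0.le, rpow_natCast]
  have key1 : θ ^ μ * A = M0 := by
    rw [hθ, div_pow, hapow, hSpow]
    field_simp
  have key2 : (1 - θ) ^ μ * B = M0 := by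
    rw [h1θ, div_pow, hbpow, hSpow]
    field_simp
  refine ⟨θ, hθ0.le, hθ1.le, ?_⟩
  intro x y hx hy
  clear_value θ M0
  clear hθ hM0 hSpow hapow hbpow h1θ
  have jensen : (x + y) ^ μ ≤ θ * (x / θ) ^ μ + (1 - θ) * (y / (1 - θ)) ^ μ := by
    have hc := (convexOn_pow (𝕜 := ℝ) μ).2 (Set.mem_Ici.mpr (by positivity : (0:ℝ) ≤ x / θ))
      (Set.mem_Ici.mpr (by positivity : (0:ℝ) ≤ y / (1 - θ))) hθ0.le h1θ0.le (by ring)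
    simpa [smul_eq_mul, mul_div_cancel₀, hθ0.ne', h1θ0.ne'] using hc
  have step : M0 * (x + y) ^ μ ≤ M0 * (θ * (x / θ) ^ μ + (1 - θ) * (y / (1 - θ)) ^ μ) :=
    mul_le_mul_of_nonneg_left jensen hM00.le
  have e1 : M0 * (θ * (x / θ) ^ μ) = θ * A * x ^ μ := by
    rw [← key1, div_pow]
    field_simp
  have e2 : M0 * ((1 - θ) * (y / (1 - θ)) ^ μ) = (1 - θ) * B * y ^ μ := by
    rw [← key2, div_pow]
    field_simp
  calc M0 * (x + y) ^ μ
    _ ≤ M0 * (θ * (x / θ) ^ μ + (1 - θ) * (y / (1 - θ)) ^ μ) := step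
    _ = M0 * (θ * (x / θ) ^ μ) + M0 * ((1 - θ) * (y / (1 - θ)) ^ μ) := by ring
    _ = θ * A * x ^ μ + (1 - θ) * B * y ^ μ := by rw [e1, e2]

end RealLemmas

section Main

open Finset SimpleGraph Real Stmt7Aux

open scoped Classical

variable (M : ℕ → ℕ → ℝ)

/-- Positivity and boundedness of the recursively defined constants. -/
lemma M_pos
    (hM1 : ∀ k : ℕ, 1 ≤ k → M k 1 = 1)
    (hM1' : ∀ l : ℕ, 1 ≤ l → M 1 l = 1)
    (hMrec : ∀ k l : ℕ, 2 ≤ k → 2 ≤ l →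
      M k l = (M k (l - 1) ^ (-1 / (max k l : ℝ)) + M (k - 1) l ^ (-1 / (max k l : ℝ)))
        ^ (-(max k l : ℝ))) :
    ∀ k l : ℕ, 1 ≤ k → 1 ≤ l → 0 < M k l ∧ M k l ≤ 1 := by
  have H : ∀ n k l : ℕ, k + l ≤ n → 1 ≤ k → 1 ≤ l → 0 < M k l ∧ M k l ≤ 1 := by
    intro n
    induction n with
    | zero => intro k l h hk hl; omega
    | succ n ih =>
      intro k l h hk hl
      rcases eq_or_lt_of_le hk with hk1 | hk2
      · rw [← hk1, hM1' l hl]; exact ⟨one_pos, le_refl 1⟩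
      rcases eq_or_lt_of_le hl with hl1 | hl2
      · rw [← hl1, hM1 k hk]; exact ⟨one_pos, le_refl 1⟩
      obtain ⟨hB, hB1⟩ := ih k (l - 1) (by omega) hk (by omega)
      obtain ⟨hA, hA1⟩ := ih (k - 1) l (by omega) (by omega) hl
      rw [hMrec k l hk2 hl2]
      have hμ0 : (0:ℝ) < (max k l : ℝ) := by
        have h1 : (1:ℝ) ≤ (k:ℝ) := by exact_mod_cast hk
        calc (0:ℝ) < 1 := one_pos
          _ ≤ (k:ℝ) := h1
          _ ≤ (max k l : ℝ) := le_max_left _ _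
      have hexp : -1 / (max (k:ℝ) (l:ℝ)) ≤ 0 := by
        rw [neg_div]
        exact neg_nonpos.mpr (by positivity)
      have hx1 : 1 ≤ M k (l - 1) ^ (-1 / (max k l : ℝ)) :=
        one_le_rpow_of_pos_of_le_one_of_nonpos hB hB1 hexp
      have hy1 : 1 ≤ M (k - 1) l ^ (-1 / (max k l : ℝ)) :=
        one_le_rpow_of_pos_of_le_one_of_nonpos hA hA1 hexp
      constructor
      · exact rpow_pos_of_pos (by linarith) _
      · exact rpow_le_one_of_one_le_of_nonpos (by linarith) (neg_nonpos.mpr hμ0.le)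
  intro k l hk hl; exact H (k + l) k l le_rfl hk hl

/-- The main finite counting bound, by induction on `k + l`. -/
lemma main_bound
    (hM1 : ∀ k : ℕ, 1 ≤ k → M k 1 = 1)
    (hM1' : ∀ l : ℕ, 1 ≤ l → M 1 l = 1)
    (hMrec : ∀ k l : ℕ, 2 ≤ k → 2 ≤ l →
      M k l = (M k (l - 1) ^ (-1 / (max k l : ℝ)) + M (k - 1) l ^ (-1 / (max k l : ℝ)))
        ^ (-(max k l : ℝ))) :
    ∀ (N k l : ℕ), k + l ≤ N → 1 ≤ k → 1 ≤ l → ∃ C : ℝ, 0 ≤ C ∧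
      ∀ (V : Type) [Fintype V] [DecidableEq V] (G : SimpleGraph V) (s : Finset V),
        M k l * (s.card : ℝ) ^ (max k l) ≤
          ((k.factorial : ℝ) * (Nc G k s : ℝ)) * (s.card : ℝ) ^ (max k l - k)
          + ((l.factorial : ℝ) * (Nc Gᶜ l s : ℝ)) * (s.card : ℝ) ^ (max k l - l)
          + C * (s.card : ℝ) ^ (max k l - 1) := by
  intro N
  induction N with
  | zero => intro k l h hk hl; omega
  | succ N ih =>
    intro k l hkl hk hl
    -- base case k = 1
    rcases eq_or_lt_of_le hk with hk1 | hk2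
    · refine ⟨0, le_rfl, ?_⟩
      intro V _ _ G s
      rw [← hk1]
      have hmax : max 1 l = l := max_eq_right hl
      rw [hmax, hM1' l hl, Nat.factorial_one, Nc_one]
      obtain ⟨e, rfl⟩ : ∃ e, l = e + 1 := ⟨l - 1, by omega⟩
      simp only [Nat.add_sub_cancel, Nat.sub_self, pow_zero, Nat.cast_one]
      have h1 : (s.card : ℝ) * (s.card : ℝ) ^ e = (s.card : ℝ) ^ (e + 1) := by
        rw [pow_succ]; ring
      have h2 : (0:ℝ) ≤ ((e+1).factorial : ℝ) * (Nc Gᶜ (e+1) s : ℝ) * 1 := by positivity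
      nlinarith [h1, h2]
    -- base case l = 1
    rcases eq_or_lt_of_le hl with hl1 | hl2
    · refine ⟨0, le_rfl, ?_⟩
      intro V _ _ G s
      rw [← hl1]
      have hmax : max k 1 = k := max_eq_left hk
      rw [hmax, hM1 k hk, Nat.factorial_one, Nc_one]
      obtain ⟨e, rfl⟩ : ∃ e, k = e + 1 := ⟨k - 1, by omega⟩
      simp only [Nat.add_sub_cancel, Nat.sub_self, pow_zero, Nat.cast_one]
      have h1 : (s.card : ℝ) * (s.card : ℝ) ^ e = (s.card : ℝ) ^ (e + 1) := by
        rw [pow_succ]; ring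
      have h2 : (0:ℝ) ≤ ((e+1).factorial : ℝ) * (Nc G (e+1) s : ℝ) * 1 := by positivity
      nlinarith [h1, h2]
    -- main case : k, l ≥ 2
    obtain ⟨C', hC'0, hIH1⟩ := ih (k - 1) l (by omega) (by omega) hl
    obtain ⟨C'', hC''0, hIH2⟩ := ih k (l - 1) (by omega) hk (by omega)
    obtain ⟨hA, hA1⟩ := M_pos M hM1 hM1' hMrec (k-1) l (by omega) hl
    obtain ⟨hB, hB1⟩ := M_pos M hM1 hM1' hMrec k (l-1) hk (by omega)
    obtain ⟨hM0pos, hM0le1⟩ := M_pos M hM1 hM1' hMrec k l hk hl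
    set μ := max k l with hμdef
    have hkμ : k ≤ μ := le_max_left _ _
    have hlμ : l ≤ μ := le_max_right _ _
    have hμ2 : 2 ≤ μ := le_trans hk2 hkμ
    obtain ⟨θ, hθ0, hθ1, hrad⟩ := radon hB hA hμ2
    have hcast : ((μ : ℕ) : ℝ) = max (k:ℝ) (l:ℝ) := by
      rw [hμdef]; push_cast; rfl
    have hMk : M k l
        = (M k (l-1) ^ (-1/(μ:ℝ)) + M (k-1) l ^ (-1/(μ:ℝ))) ^ (-(μ:ℝ)) := by
      rw [hMrec k l hk2 hl2, hcast]
    have hrad' : ∀ x y : ℝ, 0 ≤ x → 0 ≤ y →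
        M k l * (x + y) ^ μ ≤ θ * (M k (l-1) * x ^ μ) + (1-θ) * (M (k-1) l * y ^ μ) := by
      intro x y hx hy
      rw [hMk]
      have h := hrad x y hx hy
      calc (M k (l-1) ^ (-1/(μ:ℝ)) + M (k-1) l ^ (-1/(μ:ℝ))) ^ (-(μ:ℝ)) * (x + y) ^ μ
          ≤ θ * M k (l-1) * x ^ μ + (1-θ) * M (k-1) l * y ^ μ := h
        _ = θ * (M k (l-1) * x ^ μ) + (1-θ) * (M (k-1) l * y ^ μ) := by ring
    refine ⟨C' + C'' + μ, by positivity, ?_⟩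
    intro V instF instD G s
    by_cases hn0 : s.card = 0
    · rw [hn0]
      simp only [Nat.cast_zero]
      have h1 : (0:ℝ) ^ μ = 0 := zero_pow (by omega)
      rw [h1, mul_zero]
      positivity
    have hn1 : 1 ≤ s.card := Nat.one_le_iff_ne_zero.mpr hn0
    set n := s.card with hn
    set nR : ℝ := (n : ℝ) with hnR
    have hnR1 : 1 ≤ nR := by rw [hnR]; exact_mod_cast hn1
    have hnR0 : 0 < nR := by linarith
    -- per-vertex red bound
    have keyR : ∀ v ∈ s, M (k-1) l * ((nbr G v s).card : ℝ) ^ μ ≤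
        (((k-1).factorial : ℝ) * (Nc G (k-1) (nbr G v s) : ℝ)) * nR ^ (μ-(k-1))
        + ((l.factorial : ℝ) * (Nc Gᶜ l (nbr G v s) : ℝ)) * nR ^ (μ-l)
        + C' * nR ^ (μ-1) := by
      intro v hv
      set m : ℝ := ((nbr G v s).card : ℝ) with hm
      have hm0 : 0 ≤ m := by rw [hm]; positivity
      have hmn : m ≤ nR := by
        rw [hm, hnR]
        exact_mod_cast card_le_card (nbr_subset G v s)
      have hIH := hIH1 V G (nbr G v s)
      rcases le_or_gt k l with hkle | hkgt
      · have e1 : μ = l := max_eq_right hkle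
        have e2 : max (k-1) l = l := max_eq_right (by omega)
        rw [e2] at hIH
        rw [e1]
        refine hIH.trans ?_
        exact add_le_add (add_le_add (mul_le_mul_of_nonneg_left (pow_le_pow_left₀ hm0 hmn _) (by positivity)) (mul_le_mul_of_nonneg_left (pow_le_pow_left₀ hm0 hmn _) (by positivity))) (mul_le_mul_of_nonneg_left (pow_le_pow_left₀ hm0 hmn _) (by positivity))
      · have e1 : μ = k := max_eq_left hkgt.le
        have e2 : max (k-1) l = k - 1 := max_eq_left (by omega)
        rw [e2] at hIH
        rw [e1]
        have E4 : k - 1 - (k-1) = 0 := by omega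
        have E5 : k - 1 - 1 = k - 2 := by omega
        rw [E4, E5] at hIH
        have E1 : k - (k-1) = 1 := by omega
        have E2 : k - l = (k - 1 - l) + 1 := by omega
        rw [E1, E2]
        have p1 : m ^ (k-1) * m = m ^ k := by rw [← pow_succ]; congr 1; omega
        have q2 : nR ^ (k-1-l) * nR = nR ^ (k-1-l+1) := (pow_succ nR (k-1-l)).symm
        have q3 : nR ^ (k-2) * nR = nR ^ (k-1) := by rw [← pow_succ]; congr 1; omega
        calc M (k-1) l * m ^ k
            = (M (k-1) l * m ^ (k-1)) * m := by rw [← p1]; ring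
          _ ≤ ((((k-1).factorial : ℝ) * (Nc G (k-1) (nbr G v s) : ℝ)) * m ^ 0
              + ((l.factorial : ℝ) * (Nc Gᶜ l (nbr G v s) : ℝ)) * m ^ (k-1-l)
              + C' * m ^ (k-2)) * m := by
              apply mul_le_mul_of_nonneg_right hIH hm0
          _ ≤ ((((k-1).factorial : ℝ) * (Nc G (k-1) (nbr G v s) : ℝ)) * nR ^ 0
              + ((l.factorial : ℝ) * (Nc Gᶜ l (nbr G v s) : ℝ)) * nR ^ (k-1-l)
              + C' * nR ^ (k-2)) * nR := by
              exact mul_le_mul (add_le_add (add_le_add (mul_le_mul_of_nonneg_left (pow_le_pow_left₀ hm0 hmn _) (by positivity)) (mul_le_mul_of_nonneg_left (pow_le_pow_left₀ hm0 hmn _) (by positivity))) (mul_le_mul_of_nonneg_left (pow_le_pow_left₀ hm0 hmn _) (by positivity))) hmn hm0 (by clear_value nR; positivity)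
          _ = (((k-1).factorial : ℝ) * (Nc G (k-1) (nbr G v s) : ℝ)) * nR ^ 1
              + ((l.factorial : ℝ) * (Nc Gᶜ l (nbr G v s) : ℝ)) * nR ^ ((k-1-l) + 1)
              + C' * nR ^ (k-1) := by rw [← q2, ← q3]; ring
    -- per-vertex blue bound
    have keyB : ∀ v ∈ s, M k (l-1) * ((nbr Gᶜ v s).card : ℝ) ^ μ ≤
        ((k.factorial : ℝ) * (Nc G k (nbr Gᶜ v s) : ℝ)) * nR ^ (μ-k)
        + (((l-1).factorial : ℝ) * (Nc Gᶜ (l-1) (nbr Gᶜ v s) : ℝ)) * nR ^ (μ-(l-1))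
        + C'' * nR ^ (μ-1) := by
      intro v hv
      set m : ℝ := ((nbr Gᶜ v s).card : ℝ) with hm
      have hm0 : 0 ≤ m := by rw [hm]; positivity
      have hmn : m ≤ nR := by
        rw [hm, hnR]
        exact_mod_cast card_le_card (nbr_subset Gᶜ v s)
      have hIH := hIH2 V G (nbr Gᶜ v s)
      rcases le_or_gt l k with hlle | hlgt
      · have e1 : μ = k := max_eq_left hlle
        have e2 : max k (l-1) = k := max_eq_left (by omega)
        rw [e2] at hIH
        rw [e1]
        refine hIH.trans ?_
        exact add_le_add (add_le_add (mul_le_mul_of_nonneg_left (pow_le_pow_left₀ hm0 hmn _) (by positivity)) (mul_le_mul_of_nonneg_left (pow_le_pow_left₀ hm0 hmn _) (by positivity))) (mul_le_mul_of_nonneg_left (pow_le_pow_left₀ hm0 hmn _) (by positivity))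
      · have e1 : μ = l := max_eq_right hlgt.le
        have e2 : max k (l-1) = l - 1 := max_eq_right (by omega)
        rw [e2] at hIH
        rw [e1]
        have E4 : l - 1 - (l-1) = 0 := by omega
        have E5 : l - 1 - 1 = l - 2 := by omega
        rw [E4, E5] at hIH
        have E1 : l - (l-1) = 1 := by omega
        have E2 : l - k = (l - 1 - k) + 1 := by omega
        rw [E1, E2]
        have p1 : m ^ (l-1) * m = m ^ l := by rw [← pow_succ]; congr 1; omega
        have q2 : nR ^ (l-1-k) * nR = nR ^ (l-1-k+1) := (pow_succ nR (l-1-k)).symm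
        have q3 : nR ^ (l-2) * nR = nR ^ (l-1) := by rw [← pow_succ]; congr 1; omega
        calc M k (l-1) * m ^ l
            = (M k (l-1) * m ^ (l-1)) * m := by rw [← p1]; ring
          _ ≤ (((k.factorial : ℝ) * (Nc G k (nbr Gᶜ v s) : ℝ)) * m ^ (l-1-k)
              + (((l-1).factorial : ℝ) * (Nc Gᶜ (l-1) (nbr Gᶜ v s) : ℝ)) * m ^ 0
              + C'' * m ^ (l-2)) * m := by
              apply mul_le_mul_of_nonneg_right hIH hm0
          _ ≤ (((k.factorial : ℝ) * (Nc G k (nbr Gᶜ v s) : ℝ)) * nR ^ (l-1-k)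
              + (((l-1).factorial : ℝ) * (Nc Gᶜ (l-1) (nbr Gᶜ v s) : ℝ)) * nR ^ 0
              + C'' * nR ^ (l-2)) * nR := by
              exact mul_le_mul (add_le_add (add_le_add (mul_le_mul_of_nonneg_left (pow_le_pow_left₀ hm0 hmn _) (by positivity)) (mul_le_mul_of_nonneg_left (pow_le_pow_left₀ hm0 hmn _) (by positivity))) (mul_le_mul_of_nonneg_left (pow_le_pow_left₀ hm0 hmn _) (by positivity))) hmn hm0 (by clear_value nR; positivity)
          _ = ((k.factorial : ℝ) * (Nc G k (nbr Gᶜ v s) : ℝ)) * nR ^ ((l-1-k) + 1)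
              + (((l-1).factorial : ℝ) * (Nc Gᶜ (l-1) (nbr Gᶜ v s) : ℝ)) * nR ^ 1
              + C'' * nR ^ (l-1) := by rw [← q2, ← q3]; ring
    -- combine via radon
    have keyC : ∀ v ∈ s, M k l * (nR - 1) ^ μ ≤
        θ * (((k.factorial : ℝ) * (Nc G k (nbr Gᶜ v s) : ℝ)) * nR ^ (μ-k)
          + (((l-1).factorial : ℝ) * (Nc Gᶜ (l-1) (nbr Gᶜ v s) : ℝ)) * nR ^ (μ-(l-1))
          + C'' * nR ^ (μ-1))
        + (1-θ) * ((((k-1).factorial : ℝ) * (Nc G (k-1) (nbr G v s) : ℝ)) * nR ^ (μ-(k-1))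
          + ((l.factorial : ℝ) * (Nc Gᶜ l (nbr G v s) : ℝ)) * nR ^ (μ-l)
          + C' * nR ^ (μ-1)) := by
      intro v hv
      have hsum : ((nbr Gᶜ v s).card : ℝ) + ((nbr G v s).card : ℝ) = nR - 1 := by
        have h := nbr_card_add (G := G) hv
        have : ((nbr G v s).card : ℝ) + ((nbr Gᶜ v s).card : ℝ) = (s.card : ℝ) - 1 := by
          rw [← Nat.cast_add, h, Nat.cast_sub hn1, Nat.cast_one]
        rw [hnR, hn]; linarith
      calc M k l * (nR - 1) ^ μ
          = M k l * (((nbr Gᶜ v s).card : ℝ) + ((nbr G v s).card : ℝ)) ^ μ := by rw [hsum]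
        _ ≤ θ * (M k (l-1) * ((nbr Gᶜ v s).card : ℝ) ^ μ)
            + (1-θ) * (M (k-1) l * ((nbr G v s).card : ℝ) ^ μ) :=
            hrad' _ _ (by positivity) (by positivity)
        _ ≤ _ := by
            apply add_le_add
            · exact mul_le_mul_of_nonneg_left (keyB v hv) hθ0
            · exact mul_le_mul_of_nonneg_left (keyR v hv) (by linarith)
    -- sum the per-vertex bounds
    have hsummed : (n : ℝ) * (M k l * (nR - 1) ^ μ) ≤
        ∑ v ∈ s, (θ * (((k.factorial : ℝ) * (Nc G k (nbr Gᶜ v s) : ℝ)) * nR ^ (μ-k)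
          + (((l-1).factorial : ℝ) * (Nc Gᶜ (l-1) (nbr Gᶜ v s) : ℝ)) * nR ^ (μ-(l-1))
          + C'' * nR ^ (μ-1))
        + (1-θ) * ((((k-1).factorial : ℝ) * (Nc G (k-1) (nbr G v s) : ℝ)) * nR ^ (μ-(k-1))
          + ((l.factorial : ℝ) * (Nc Gᶜ l (nbr G v s) : ℝ)) * nR ^ (μ-l)
          + C' * nR ^ (μ-1))) := by
      have h := Finset.sum_le_sum keyC
      rw [Finset.sum_const, nsmul_eq_mul] at h
      exact h
    -- counting identities and bounds
    have F1 : ∑ v ∈ s, (Nc G k (nbr Gᶜ v s) : ℝ) ≤ (n : ℝ) * (Nc G k s : ℝ) := by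
      have h : ∑ v ∈ s, Nc G k (nbr Gᶜ v s) ≤ n * Nc G k s := by
        calc ∑ v ∈ s, Nc G k (nbr Gᶜ v s) ≤ ∑ _v ∈ s, Nc G k s :=
              Finset.sum_le_sum fun v hv => Nc_mono G k (nbr_subset Gᶜ v s)
          _ = n * Nc G k s := by rw [Finset.sum_const, smul_eq_mul]
      exact_mod_cast h
    have F4 : ∑ v ∈ s, (Nc Gᶜ l (nbr G v s) : ℝ) ≤ (n : ℝ) * (Nc Gᶜ l s : ℝ) := by
      have h : ∑ v ∈ s, Nc Gᶜ l (nbr G v s) ≤ n * Nc Gᶜ l s := by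
        calc ∑ v ∈ s, Nc Gᶜ l (nbr G v s) ≤ ∑ _v ∈ s, Nc Gᶜ l s :=
              Finset.sum_le_sum fun v hv => Nc_mono Gᶜ l (nbr_subset G v s)
          _ = n * Nc Gᶜ l s := by rw [Finset.sum_const, smul_eq_mul]
      exact_mod_cast h
    have F2 : ∑ v ∈ s, (Nc Gᶜ (l-1) (nbr Gᶜ v s) : ℝ) = (l : ℝ) * (Nc Gᶜ l s : ℝ) := by
      have h := key_id Gᶜ (l-1) s
      rw [show (l-1)+1 = l from by omega] at h
      exact_mod_cast congrArg (Nat.cast : ℕ → ℝ) h.symm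
    have F3 : ∑ v ∈ s, (Nc G (k-1) (nbr G v s) : ℝ) = (k : ℝ) * (Nc G k s : ℝ) := by
      have h := key_id G (k-1) s
      rw [show (k-1)+1 = k from by omega] at h
      exact_mod_cast congrArg (Nat.cast : ℕ → ℝ) h.symm
    -- expand the sum
    have hsum_eq : ∑ v ∈ s, (θ * (((k.factorial : ℝ) * (Nc G k (nbr Gᶜ v s) : ℝ)) * nR ^ (μ-k)
          + (((l-1).factorial : ℝ) * (Nc Gᶜ (l-1) (nbr Gᶜ v s) : ℝ)) * nR ^ (μ-(l-1))
          + C'' * nR ^ (μ-1))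
        + (1-θ) * ((((k-1).factorial : ℝ) * (Nc G (k-1) (nbr G v s) : ℝ)) * nR ^ (μ-(k-1))
          + ((l.factorial : ℝ) * (Nc Gᶜ l (nbr G v s) : ℝ)) * nR ^ (μ-l)
          + C' * nR ^ (μ-1)))
        = (θ * (k.factorial : ℝ) * nR ^ (μ-k)) * (∑ v ∈ s, (Nc G k (nbr Gᶜ v s) : ℝ))
        + (θ * ((l-1).factorial : ℝ) * nR ^ (μ-(l-1))) * (∑ v ∈ s, (Nc Gᶜ (l-1) (nbr Gᶜ v s) : ℝ))
        + ((1-θ) * ((k-1).factorial : ℝ) * nR ^ (μ-(k-1))) * (∑ v ∈ s, (Nc G (k-1) (nbr G v s) : ℝ))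
        + ((1-θ) * (l.factorial : ℝ) * nR ^ (μ-l)) * (∑ v ∈ s, (Nc Gᶜ l (nbr G v s) : ℝ))
        + (n : ℝ) * (θ * C'' * nR ^ (μ-1) + (1-θ) * C' * nR ^ (μ-1)) := by
      rw [Finset.sum_congr rfl (fun v hv => show _ =
        (θ * (k.factorial : ℝ) * nR ^ (μ-k)) * (Nc G k (nbr Gᶜ v s) : ℝ)
        + (θ * ((l-1).factorial : ℝ) * nR ^ (μ-(l-1))) * (Nc Gᶜ (l-1) (nbr Gᶜ v s) : ℝ)
        + ((1-θ) * ((k-1).factorial : ℝ) * nR ^ (μ-(k-1))) * (Nc G (k-1) (nbr G v s) : ℝ)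
        + ((1-θ) * (l.factorial : ℝ) * nR ^ (μ-l)) * (Nc Gᶜ l (nbr G v s) : ℝ)
        + (θ * C'' * nR ^ (μ-1) + (1-θ) * C' * nR ^ (μ-1)) from by ring)]
      rw [Finset.sum_add_distrib, Finset.sum_add_distrib, Finset.sum_add_distrib,
        Finset.sum_add_distrib, ← Finset.mul_sum, ← Finset.mul_sum, ← Finset.mul_sum,
        ← Finset.mul_sum, Finset.sum_const, nsmul_eq_mul]
    -- algebraic facts
    have hfk : ((k-1).factorial : ℝ) * (k : ℝ) = (k.factorial : ℝ) := by
      have := Nat.mul_factorial_pred (n := k) (by omega)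
      exact_mod_cast by rw [mul_comm]; exact_mod_cast congrArg (Nat.cast : ℕ → ℝ) this
    have hfl : ((l-1).factorial : ℝ) * (l : ℝ) = (l.factorial : ℝ) := by
      have := Nat.mul_factorial_pred (n := l) (by omega)
      exact_mod_cast by rw [mul_comm]; exact_mod_cast congrArg (Nat.cast : ℕ → ℝ) this
    have hp1 : nR ^ (μ-(k-1)) = nR ^ (μ-k) * nR := by
      rw [show μ-(k-1) = (μ-k)+1 from by omega, pow_succ]
    have hp2 : nR ^ (μ-(l-1)) = nR ^ (μ-l) * nR := by
      rw [show μ-(l-1) = (μ-l)+1 from by omega, pow_succ]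
    -- Bernoulli step
    have hbern : M k l * nR ^ μ ≤ M k l * (nR - 1) ^ μ + (μ : ℝ) * nR ^ (μ-1) := by
      have h := pow_le_sub_pow_add hnR1 μ (by omega)
      have h2 : M k l * nR ^ μ ≤ M k l * ((nR - 1) ^ μ + (μ:ℝ) * nR ^ (μ-1)) :=
        mul_le_mul_of_nonneg_left h hM0pos.le
      have h3 : M k l * ((μ:ℝ) * nR ^ (μ-1)) ≤ 1 * ((μ:ℝ) * nR ^ (μ-1)) := by
        apply mul_le_mul_of_nonneg_right hM0le1
        positivity
      nlinarith [h2, h3]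
    -- put everything together, multiplied by n
    have hT1 : (0:ℝ) ≤ (Nc G k s : ℝ) := by positivity
    have hT2 : (0:ℝ) ≤ (Nc Gᶜ l s : ℝ) := by positivity
    have hbig : (n : ℝ) * (M k l * nR ^ μ) ≤
        (n : ℝ) * (((k.factorial : ℝ) * (Nc G k s : ℝ)) * nR ^ (μ-k)
          + ((l.factorial : ℝ) * (Nc Gᶜ l s : ℝ)) * nR ^ (μ-l)
          + (C' + C'' + μ) * nR ^ (μ-1)) := by
      have s1 : (n : ℝ) * (M k l * nR ^ μ) ≤
          (n : ℝ) * (M k l * (nR - 1) ^ μ) + (n : ℝ) * ((μ : ℝ) * nR ^ (μ-1)) := by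
        have h := mul_le_mul_of_nonneg_left hbern (by positivity : (0:ℝ) ≤ (n : ℝ))
        exact le_trans h (le_of_eq (by ring))
      have s2 := hsummed
      rw [hsum_eq] at s2
      -- apply F1-F4
      have s3 : (θ * (k.factorial : ℝ) * nR ^ (μ-k)) * (∑ v ∈ s, (Nc G k (nbr Gᶜ v s) : ℝ))
          ≤ (θ * (k.factorial : ℝ) * nR ^ (μ-k)) * ((n : ℝ) * (Nc G k s : ℝ)) := by
        apply mul_le_mul_of_nonneg_left F1
        exact mul_nonneg (mul_nonneg hθ0 (by positivity)) (by positivity)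
      have s4 : ((1-θ) * (l.factorial : ℝ) * nR ^ (μ-l)) * (∑ v ∈ s, (Nc Gᶜ l (nbr G v s) : ℝ))
          ≤ ((1-θ) * (l.factorial : ℝ) * nR ^ (μ-l)) * ((n : ℝ) * (Nc Gᶜ l s : ℝ)) := by
        apply mul_le_mul_of_nonneg_left F4
        have h1θ0 : (0:ℝ) ≤ 1 - θ := by linarith
        exact mul_nonneg (mul_nonneg h1θ0 (by positivity)) (by positivity)
      rw [F2, F3] at s2
      have s5 := le_trans s2 (by
        have h1θ0 : (0:ℝ) ≤ 1 - θ := by linarith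
        linarith [s3, s4] :
              (θ * (k.factorial : ℝ) * nR ^ (μ-k)) * (∑ v ∈ s, (Nc G k (nbr Gᶜ v s) : ℝ))
              + (θ * ((l-1).factorial : ℝ) * nR ^ (μ-(l-1))) * ((l : ℝ) * (Nc Gᶜ l s : ℝ))
              + ((1-θ) * ((k-1).factorial : ℝ) * nR ^ (μ-(k-1))) * ((k : ℝ) * (Nc G k s : ℝ))
              + ((1-θ) * (l.factorial : ℝ) * nR ^ (μ-l)) * (∑ v ∈ s, (Nc Gᶜ l (nbr G v s) : ℝ))
              + (n : ℝ) * (θ * C'' * nR ^ (μ-1) + (1-θ) * C' * nR ^ (μ-1))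
              ≤ (θ * (k.factorial : ℝ) * nR ^ (μ-k)) * ((n : ℝ) * (Nc G k s : ℝ))
              + (θ * ((l-1).factorial : ℝ) * nR ^ (μ-(l-1))) * ((l : ℝ) * (Nc Gᶜ l s : ℝ))
              + ((1-θ) * ((k-1).factorial : ℝ) * nR ^ (μ-(k-1))) * ((k : ℝ) * (Nc G k s : ℝ))
              + ((1-θ) * (l.factorial : ℝ) * nR ^ (μ-l)) * ((n : ℝ) * (Nc Gᶜ l s : ℝ))
              + (n : ℝ) * (θ * C'' * nR ^ (μ-1) + (1-θ) * C' * nR ^ (μ-1)))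
      calc (n : ℝ) * (M k l * nR ^ μ)
          ≤ (n : ℝ) * (M k l * (nR - 1) ^ μ) + (n : ℝ) * ((μ : ℝ) * nR ^ (μ-1)) := s1
        _ ≤ ((θ * (k.factorial : ℝ) * nR ^ (μ-k)) * ((n : ℝ) * (Nc G k s : ℝ))
            + (θ * ((l-1).factorial : ℝ) * nR ^ (μ-(l-1))) * ((l : ℝ) * (Nc Gᶜ l s : ℝ))
            + ((1-θ) * ((k-1).factorial : ℝ) * nR ^ (μ-(k-1))) * ((k : ℝ) * (Nc G k s : ℝ))
            + ((1-θ) * (l.factorial : ℝ) * nR ^ (μ-l)) * ((n : ℝ) * (Nc Gᶜ l s : ℝ))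
            + (n : ℝ) * (θ * C'' * nR ^ (μ-1) + (1-θ) * C' * nR ^ (μ-1)))
            + (n : ℝ) * ((μ : ℝ) * nR ^ (μ-1)) := add_le_add_left s5 _
        _ ≤ (n : ℝ) * (((k.factorial : ℝ) * (Nc G k s : ℝ)) * nR ^ (μ-k)
            + ((l.factorial : ℝ) * (Nc Gᶜ l s : ℝ)) * nR ^ (μ-l)
            + (C' + C'' + μ) * nR ^ (μ-1)) := by
            -- use hp1, hp2, hfk, hfl and nR = n to rearrange/compare
            rw [hp1, hp2]
            have hnn : (n : ℝ) = nR := hnR.symm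
            rw [hnn]
            have expand : (θ * (k.factorial : ℝ) * nR ^ (μ-k)) * (nR * (Nc G k s : ℝ))
                + (θ * ((l-1).factorial : ℝ) * (nR ^ (μ-l) * nR)) * ((l : ℝ) * (Nc Gᶜ l s : ℝ))
                + ((1-θ) * ((k-1).factorial : ℝ) * (nR ^ (μ-k) * nR)) * ((k : ℝ) * (Nc G k s : ℝ))
                + ((1-θ) * (l.factorial : ℝ) * nR ^ (μ-l)) * (nR * (Nc Gᶜ l s : ℝ))
                + nR * (θ * C'' * nR ^ (μ-1) + (1-θ) * C' * nR ^ (μ-1))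
                + nR * ((μ : ℝ) * nR ^ (μ-1))
                = nR * (((k.factorial : ℝ) * (Nc G k s : ℝ)) * nR ^ (μ-k)
                  + ((l.factorial : ℝ) * (Nc Gᶜ l s : ℝ)) * nR ^ (μ-l)
                  + (θ * C'' + (1-θ) * C' + μ) * nR ^ (μ-1)) := by
              rw [← hfk, ← hfl]
              ring
            rw [expand]
            apply mul_le_mul_of_nonneg_left _ hnR0.le
            have ha1 : θ * C'' ≤ C'' := mul_le_of_le_one_left hC''0 hθ1
            have ha2 : (1-θ) * C' ≤ C' := mul_le_of_le_one_left hC'0 (by linarith)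
            have h1 : θ * C'' + (1-θ) * C' + μ ≤ C' + C'' + μ := by linarith
            have h3 : (0:ℝ) ≤ nR ^ (μ-1) := by positivity
            have h4 := mul_le_mul_of_nonneg_right h1 h3
            linarith
    -- cancel n
    exact le_of_mul_le_mul_left hbig hnR0

/-- `cliqueCount` agrees with the auxiliary count on the full vertex set. -/
lemma cliqueCount_eq {n : ℕ} (G : SimpleGraph (Fin n)) (t : ℕ) :
    Stmt7Aux.Nc G t (Finset.univ : Finset (Fin n)) = cliqueCount G t := by
  classical
  rw [cliqueCount, Stmt7Aux.Nc, Finset.powerset_univ]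
  rw [← Set.ncard_coe_finset]
  congr 1
  ext T
  simp

end Main

theorem stmt7 (M : ℕ → ℕ → ℝ)
    (hM1 : ∀ k : ℕ, 1 ≤ k → M k 1 = 1)
    (hM1' : ∀ l : ℕ, 1 ≤ l → M 1 l = 1)
    (hMrec : ∀ k l : ℕ, 2 ≤ k → 2 ≤ l →
      M k l = (M k (l - 1) ^ (-1 / (max k l : ℝ)) + M (k - 1) l ^ (-1 / (max k l : ℝ)))
        ^ (-(max k l : ℝ)))
    (t : ℕ) (ht : 2 ≤ t)
    (c : ℝ) (hc : Filter.Tendsto (fun n => ctn t n) Filter.atTop (nhds c)) :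
    M t t ≤ c := by
  classical
  obtain ⟨C, hC0, hmain⟩ := main_bound M hM1 hM1' hMrec (t + t) t t le_rfl (by omega) (by omega)
  obtain ⟨hMpos, hMle1⟩ := M_pos M hM1 hM1' hMrec t t (by omega) (by omega)
  have hkt : ∀ n : ℕ, M t t * (n : ℝ) ^ t ≤
      (t.factorial : ℝ) * (kt n t : ℝ) + C * (n : ℝ) ^ (t - 1) := by
    intro n
    have hne : {m : ℕ | ∃ G : SimpleGraph (Fin n),
        cliqueCount G t + cliqueCount Gᶜ t = m}.Nonempty := ⟨_, ⊥, rfl⟩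
    have hmem := Nat.sInf_mem hne
    obtain ⟨G0, hG0⟩ := hmem
    have h := hmain (Fin n) G0 (Finset.univ : Finset (Fin n))
    rw [max_self, Nat.sub_self, pow_zero] at h
    have hcard : (((Finset.univ : Finset (Fin n)).card : ℕ) : ℝ) = (n : ℝ) := by simp
    rw [hcard] at h
    have e1 : Stmt7Aux.Nc G0 t Finset.univ = cliqueCount G0 t := cliqueCount_eq G0 t
    have e2 : Stmt7Aux.Nc G0ᶜ t Finset.univ = cliqueCount G0ᶜ t := cliqueCount_eq G0ᶜ t
    rw [e1, e2] at h
    have hsum : (cliqueCount G0 t : ℝ) + (cliqueCount G0ᶜ t : ℝ) = (kt n t : ℝ) := by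
      rw [kt]
      exact_mod_cast congrArg (Nat.cast : ℕ → ℝ) hG0
    have hfac : (t.factorial : ℝ) * (kt n t : ℝ)
        = (t.factorial : ℝ) * (cliqueCount G0 t : ℝ)
          + (t.factorial : ℝ) * (cliqueCount G0ᶜ t : ℝ) := by
      rw [← hsum]; ring
    linarith [h]
  have hev : ∀ n : ℕ, 2 * t ≤ n → M t t - C * 2 ^ t / (n : ℝ) ≤ ctn t n := by
    intro n hn
    have hn0 : 0 < n := by omega
    have hnR0 : (0:ℝ) < (n : ℝ) := by exact_mod_cast hn0
    have htn : t ≤ n := by omega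
    have hchoose : 0 < n.choose t := Nat.choose_pos htn
    have hchooseR : (0:ℝ) < (n.choose t : ℝ) := by exact_mod_cast hchoose
    rw [ctn, le_div_iff₀ hchooseR]
    have hfacpos : (0:ℝ) < (t.factorial : ℝ) := by positivity
    rw [← mul_le_mul_iff_right₀ hfacpos]
    have hD : (t.factorial : ℝ) * (n.choose t : ℝ) = (n.descFactorial t : ℝ) := by
      rw [← Nat.cast_mul]
      congr 1
      exact (Nat.descFactorial_eq_factorial_mul_choose n t).symm
    have e : (t.factorial : ℝ) * ((M t t - C * 2 ^ t / (n : ℝ)) * (n.choose t : ℝ))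
        = (M t t - C * 2 ^ t / (n : ℝ)) * (n.descFactorial t : ℝ) := by
      rw [← hD]; ring
    rw [e]
    have hDle : (n.descFactorial t : ℝ) ≤ (n : ℝ) ^ t := by
      exact_mod_cast Nat.descFactorial_le_pow n t
    have hDge : ((n : ℝ) / 2) ^ t ≤ (n.descFactorial t : ℝ) := by
      have h1 : (n - t) ^ t ≤ n.descFactorial t :=
        le_trans (Nat.pow_le_pow_left (by omega) t) (Nat.pow_sub_le_descFactorial n t)
      have h2 : ((n : ℝ) / 2) ≤ (((n - t : ℕ)) : ℝ) := by
        rw [Nat.cast_sub htn]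
        have h3 : (t : ℝ) ≤ (n : ℝ) / 2 := by
          have : ((2 * t : ℕ) : ℝ) ≤ (n : ℝ) := by exact_mod_cast hn
          push_cast at this
          linarith
        linarith
      calc ((n : ℝ) / 2) ^ t ≤ (((n - t : ℕ)) : ℝ) ^ t :=
            pow_le_pow_left₀ (by positivity) h2 t
        _ ≤ (n.descFactorial t : ℝ) := by exact_mod_cast h1
    have h1 : M t t * (n.descFactorial t : ℝ) ≤ M t t * (n : ℝ) ^ t :=
      mul_le_mul_of_nonneg_left hDle hMpos.le
    have h2 : C * (n : ℝ) ^ (t - 1) ≤ (C * 2 ^ t / (n : ℝ)) * (n.descFactorial t : ℝ) := by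
      have h3 : (C * 2 ^ t / (n : ℝ)) * (((n : ℝ) / 2) ^ t)
          ≤ (C * 2 ^ t / (n : ℝ)) * (n.descFactorial t : ℝ) :=
        mul_le_mul_of_nonneg_left hDge (by positivity)
      have hpow : (n : ℝ) ^ t = (n : ℝ) ^ (t - 1) * (n : ℝ) := by
        rw [← pow_succ]; congr 1; omega
      have h4 : (C * 2 ^ t / (n : ℝ)) * (((n : ℝ) / 2) ^ t) = C * (n : ℝ) ^ (t - 1) := by
        rw [div_pow, hpow]
        have h2t : (0:ℝ) < 2 ^ t := by positivity
        field_simp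
      linarith
    have hktn := hkt n
    have e2 : (M t t - C * 2 ^ t / (n : ℝ)) * (n.descFactorial t : ℝ)
        = M t t * (n.descFactorial t : ℝ)
          - (C * 2 ^ t / (n : ℝ)) * (n.descFactorial t : ℝ) := by ring
    linarith
  have hlim : Filter.Tendsto (fun n : ℕ => M t t - C * 2 ^ t / (n : ℝ))
      Filter.atTop (nhds (M t t)) := by
    have h0 : Filter.Tendsto (fun n : ℕ => C * 2 ^ t / (n : ℝ)) Filter.atTop (nhds 0) :=
      Filter.Tendsto.div_atTop tendsto_const_nhds tendsto_natCast_atTop_atTop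
    simpa using Filter.Tendsto.sub (tendsto_const_nhds (x := M t t)) h0
  exact le_of_tendsto_of_tendsto hlim hc (Filter.eventually_atTop.mpr ⟨2 * t, hev⟩)
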